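/- Let A ∈ ℝ^{n×n}, B ∈ ℝ^{n×m}, C ∈ ℝ^{p×n}, and suppose x: ℝ → ℝ^n, u: ℝ → ℝ^m are C^1 trajectories with ẋ_t = Ax_t + Bu_t and y_t = Cx_t. Fix T sampling shifts with step Δt > 0, and suppose α: ℝ → ℝ^T is differentiable with H_1(x_{(t,Δt,T)})·α_t^{(1)} = 0 for all t, where H_1(x_{(t,Δt,T)}) := [x_t, x_{t+Δt}, ..., x_{t+(T-1)Δt}]. Define x̄_t := H_1(x_{(t,Δt,T)})α_t, ū_t := H_1(u_{(t,Δt,T)})α_t, ȳ_t := H_1(y_{(t,Δt,T)})α_t. Then d/dt x̄_t = A x̄_t + B ū_t and ȳ_t = C x̄_t; i.e., (ū, ȳ) is an input–output trajectory of the system. -/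

import Mathlib

open Matrix

/-- The delayed sample matrix `H₁(x_{(t,Δt,T)}) = [x_t, x_{t+Δt}, …, x_{t+(T-1)Δt}]`. -/
noncomputable def sampleMat {k : ℕ} (T : ℕ) (Δt : ℝ) (x : ℝ → Fin k → ℝ) (t : ℝ) :
    Matrix (Fin k) (Fin T) ℝ :=
  Matrix.of fun i j => x (t + (j : ℕ) * Δt) i

/-- If `ẋ = Ax + Bu`, `y = Cx`, and the differentiable weighting `α` satisfies
`H₁(x_{(t,Δt,T)}) α' = 0` for all `t`, then `x̄ := H₁(x)α`, `ū := H₁(u)α`, `ȳ := H₁(y)α`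
satisfy `d/dt x̄ = A x̄ + B ū` and `ȳ = C x̄`; i.e. `(ū, ȳ)` is an input–output trajectory. -/
theorem trajectory_generation (n m p T : ℕ)
    (A : Matrix (Fin n) (Fin n) ℝ) (B : Matrix (Fin n) (Fin m) ℝ)
    (C : Matrix (Fin p) (Fin n) ℝ)
    (Δt : ℝ) (hΔt : 0 < Δt)
    (x : ℝ → Fin n → ℝ) (u : ℝ → Fin m → ℝ) (y : ℝ → Fin p → ℝ)
    (hu : Differentiable ℝ u)
    (hx : ∀ t : ℝ, HasDerivAt x (A *ᵥ x t + B *ᵥ u t) t)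
    (hy : ∀ t : ℝ, y t = C *ᵥ x t)
    (α α' : ℝ → Fin T → ℝ)
    (hα : ∀ t : ℝ, HasDerivAt α (α' t) t)
    (hker : ∀ t : ℝ, sampleMat T Δt x t *ᵥ α' t = 0) :
    (∀ t : ℝ, HasDerivAt (fun τ => sampleMat T Δt x τ *ᵥ α τ)
        (A *ᵥ (sampleMat T Δt x t *ᵥ α t) + B *ᵥ (sampleMat T Δt u t *ᵥ α t)) t) ∧
    (∀ t : ℝ, sampleMat T Δt y t *ᵥ α t = C *ᵥ (sampleMat T Δt x t *ᵥ α t)) := by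

  constructor
  · intro t
    rw [hasDerivAt_pi]
    intro i
    have key : HasDerivAt (fun τ => ∑ j : Fin T, x (τ + (j:ℕ) * Δt) i * α τ j)
        (∑ j : Fin T, ((A *ᵥ x (t + (j:ℕ) * Δt) + B *ᵥ u (t + (j:ℕ) * Δt)) i * α t j
          + x (t + (j:ℕ) * Δt) i * α' t j)) t := by
      apply HasDerivAt.fun_sum
      intro j _
      have hg : HasDerivAt (fun τ : ℝ => τ + (j:ℕ) * Δt) 1 t := by
        simpa using (hasDerivAt_id t).add_const ((j:ℕ) * Δt)
      have hshift : HasDerivAt (fun τ : ℝ => x (τ + (j:ℕ) * Δt))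
          (A *ᵥ x (t + (j:ℕ) * Δt) + B *ᵥ u (t + (j:ℕ) * Δt)) t := by
        have h2 := (hx (t + (j:ℕ) * Δt)).scomp t hg
        simp only [one_smul] at h2
        exact h2
      have hxi : HasDerivAt (fun τ : ℝ => x (τ + (j:ℕ) * Δt) i)
          ((A *ᵥ x (t + (j:ℕ) * Δt) + B *ᵥ u (t + (j:ℕ) * Δt)) i) t :=
        (hasDerivAt_pi.mp hshift) i
      have hαi : HasDerivAt (fun τ : ℝ => α τ j) (α' t j) t :=
        (hasDerivAt_pi.mp (hα t)) j
      exact hxi.mul hαi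
    have hsplit : (∑ j : Fin T, ((A *ᵥ x (t + (j:ℕ) * Δt) + B *ᵥ u (t + (j:ℕ) * Δt)) i * α t j
          + x (t + (j:ℕ) * Δt) i * α' t j))
        = (A *ᵥ (sampleMat T Δt x t *ᵥ α t) + B *ᵥ (sampleMat T Δt u t *ᵥ α t)) i := by
      have hk : (∑ j : Fin T, x (t + (j:ℕ) * Δt) i * α' t j) = 0 := by
        have := congrFun (hker t) i
        simpa [sampleMat, mulVec, dotProduct] using this
      rw [Finset.sum_add_distrib, hk, add_zero]
      simp only [Pi.add_apply, mulVec, dotProduct, sampleMat, Matrix.of_apply, add_mul,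
        Finset.sum_add_distrib, Finset.mul_sum, Finset.sum_mul]
      congr 1
      · rw [Finset.sum_comm]
        exact Finset.sum_congr rfl fun k _ => Finset.sum_congr rfl fun j _ => by ring
      · rw [Finset.sum_comm]
        exact Finset.sum_congr rfl fun k _ => Finset.sum_congr rfl fun j _ => by ring
    rw [hsplit] at key
    simp only [mulVec, dotProduct, sampleMat, Matrix.of_apply] at key ⊢
    exact key
  · intro t
    have hmat : sampleMat T Δt y t = C * sampleMat T Δt x t := by
      ext i j
      simp [sampleMat, hy, Matrix.mul_apply, mulVec, dotProduct]
    rw [hmat, ← mulVec_mulVec]
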